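/- Every cube root a of a₀⁻¹ in GL₃(ℂ) has three distinct eigenvalues, and there are exactly 27 matrices a ∈ GL₃(ℂ) with a³ = a₀⁻¹, where a₀ = [[0,0,-1],[1,0,-1],[0,1,-1]]. -/

import Mathlib

namespace Stmt15

open Matrix Polynomial Complex Finset

noncomputable def a₀ : Matrix (Fin 3) (Fin 3) ℂ := !![0, 0, -1; 1, 0, -1; 0, 1, -1]

noncomputable def P : Matrix (Fin 3) (Fin 3) ℂ := !![1, -I, I; 0, 1-I, 1+I; 1, 1, 1]
noncomputable def Q : Matrix (Fin 3) (Fin 3) ℂ :=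
  !![1/2, -1/2, 1/2; (-1+I)/4, (1+I)/4, (1-I)/4; (-1-I)/4, (1-I)/4, (1+I)/4]
noncomputable def d : Fin 3 → ℂ := ![-1, I, -I]
noncomputable def D : Matrix (Fin 3) (Fin 3) ℂ := Matrix.diagonal d
noncomputable def s : ℂ := (Real.sqrt 3 : ℝ)
noncomputable def r : Fin 3 → Finset ℂ :=
  ![{-1, (1+s*I)/2, (1-s*I)/2}, {(s+I)/2, (-s+I)/2, -I}, {(s-I)/2, (-s-I)/2, I}]

lemma hPQ : P * Q = 1 := by
  ext i j
  fin_cases i <;> fin_cases j <;>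
    simp [P, Q, Matrix.mul_apply, Fin.sum_univ_three, Complex.ext_iff, Matrix.vecHead,
      Matrix.vecTail] <;> norm_num

lemma hQP : Q * P = 1 := by
  ext i j
  fin_cases i <;> fin_cases j <;>
    simp [P, Q, Matrix.mul_apply, Fin.sum_univ_three, Complex.ext_iff, Matrix.vecHead,
      Matrix.vecTail] <;> norm_num

lemma hDmat : D = !![-1,0,0; 0,I,0; 0,0,-I] := by
  ext i j
  fin_cases i <;> fin_cases j <;> simp [D, d, Matrix.diagonal, Matrix.vecHead, Matrix.vecTail]

lemma ha₀inv : a₀⁻¹ = !![-1,1,0; -1,0,1; -1,0,0] := by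
  apply Matrix.inv_eq_right_inv
  ext i j
  fin_cases i <;> fin_cases j <;>
    simp [a₀, Matrix.mul_apply, Fin.sum_univ_three, Matrix.one_apply, Matrix.vecHead,
      Matrix.vecTail]

lemma hPDQ : a₀⁻¹ = P * D * Q := by
  rw [ha₀inv, hDmat]
  ext i j
  fin_cases i <;> fin_cases j <;>
    simp [P, Q, Matrix.mul_apply, Fin.sum_univ_three, Complex.ext_iff, Matrix.vecHead,
      Matrix.vecTail] <;> norm_num

lemma charpoly_conj (b : Matrix (Fin 3) (Fin 3) ℂ) : (P * b * Q).charpoly = b.charpoly := by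
  have hmap : (P.map C) * (Q.map C) = 1 := by
    rw [← Matrix.map_mul, hPQ, Matrix.map_one _ (map_zero C) (map_one C)]
  have hs : (P.map C) * scalar (Fin 3) X * (Q.map C) = scalar (Fin 3) X := by
    rw [Matrix.mul_assoc, (scalar_commute X (Commute.all X) (Q.map C)).eq,
      ← Matrix.mul_assoc, hmap, Matrix.one_mul]
  have hchar : charmatrix (P * b * Q) = (P.map C) * charmatrix b * (Q.map C) := by
    simp only [charmatrix, RingHom.mapMatrix_apply, Matrix.map_mul, Matrix.mul_sub,
      Matrix.sub_mul]
    rw [hs]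
  unfold Matrix.charpoly
  rw [hchar, Matrix.det_mul, Matrix.det_mul]
  have hd : (P.map C).det * (Q.map C).det = 1 := by rw [← Matrix.det_mul, hmap, Matrix.det_one]
  linear_combination (charmatrix b).det * hd

lemma d_inj : Function.Injective d := by
  intro i j h
  fin_cases i <;> fin_cases j <;> simp_all [d, Complex.ext_iff] <;> norm_num at h

lemma charpoly_diag (x : Fin 3 → ℂ) :
    (Matrix.diagonal x).charpoly = ∏ i, (X - C (x i)) := by
  rw [Matrix.charpoly_of_upperTriangular _ (Matrix.blockTriangular_diagonal x)]
  simp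

lemma roots_charpoly_diag (x : Fin 3 → ℂ) :
    (Matrix.diagonal x).charpoly.roots = (Finset.univ.val.map x) := by
  rw [charpoly_diag, ← roots_multiset_prod_X_sub_C (Finset.univ.val.map x), Multiset.map_map]
  rfl

lemma eq_diagonal_of_comm (b : Matrix (Fin 3) (Fin 3) ℂ) (h : b * D = D * b) :
    b = Matrix.diagonal (fun i => b i i) := by
  ext i j
  by_cases hij : i = j
  · subst hij; simp
  · have h1 : b i j * d j = d i * b i j := by
      have := congrFun (congrFun h i) j
      simpa [D, Matrix.mul_diagonal, Matrix.diagonal_mul] using this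
    have hd : d i ≠ d j := fun e => hij (d_inj e)
    have h2 : b i j * (d j - d i) = 0 := by ring_nf; linear_combination h1
    rcases mul_eq_zero.mp h2 with h0 | h0
    · simp [Matrix.diagonal_apply_ne _ hij, h0]
    · exact absurd (by linear_combination h0) (sub_ne_zero.mpr hd.symm).elim

lemma hs2 : s ^ 2 = 3 := by
  rw [s, ← Complex.ofReal_pow, Real.sq_sqrt (by norm_num : (0:ℝ) ≤ 3)]
  norm_num

lemma fact0 (c : ℂ) : c^3 - d 0 = (c - (-1)) * (c - (1+s*I)/2) * (c - (1-s*I)/2) := by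
  have h := hs2; have hI : I^2 = -1 := Complex.I_sq
  simp only [d]; norm_num
  linear_combination (-(c+1)/4) * h + ((c+1)*s^2/4) * hI

lemma fact1 (c : ℂ) : c^3 - d 1 = (c - (s+I)/2) * (c - (-s+I)/2) * (c - (-I)) := by
  have h := hs2; have hI : I^2 = -1 := Complex.I_sq
  simp only [d]; norm_num
  linear_combination ((c+I)/4) * h + ((3*c - I)/4) * hI

lemma fact2 (c : ℂ) : c^3 - d 2 = (c - (s-I)/2) * (c - (-s-I)/2) * (c - I) := by
  have h := hs2; have hI : I^2 = -1 := Complex.I_sq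
  simp only [d, Matrix.cons_val]; norm_num
  linear_combination ((c-I)/4) * h + ((3*c + I)/4) * hI

lemma mem_r_iff (i : Fin 3) (c : ℂ) : c ∈ r i ↔ c ^ 3 = d i := by
  have key : c^3 - d i = 0 ↔ c ∈ r i := by
    match i with
    | 0 =>
      rw [fact0]
      simp [r, mul_eq_zero, sub_eq_zero, add_eq_zero_iff_eq_neg]
      tauto
    | 1 =>
      rw [fact1]
      simp [r, mul_eq_zero, sub_eq_zero, add_eq_zero_iff_eq_neg]
      tauto
    | 2 =>
      rw [fact2]
      simp [r, mul_eq_zero, sub_eq_zero, add_eq_zero_iff_eq_neg]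
      tauto
  rw [← key, sub_eq_zero]

lemma hs_pos : (0:ℝ) < Real.sqrt 3 := Real.sqrt_pos.mpr (by norm_num)

set_option linter.unnecessarySeqFocus false in
lemma card_r (i : Fin 3) : (r i).card = 3 := by
  have h := hs_pos
  match i with
  | 0 =>
    refine Finset.card_eq_three.mpr ⟨_, _, _, ?_, ?_, ?_, rfl⟩ <;>
      simp [Complex.ext_iff, s, div_eq_iff] <;> intro h' <;> nlinarith
  | 1 =>
    refine Finset.card_eq_three.mpr ⟨_, _, _, ?_, ?_, ?_, rfl⟩ <;>
      simp [Complex.ext_iff, s, div_eq_iff] <;> intro h' <;> nlinarith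
  | 2 =>
    refine Finset.card_eq_three.mpr ⟨_, _, _, ?_, ?_, ?_, rfl⟩ <;>
      simp [Complex.ext_iff, s, div_eq_iff] <;> intro h' <;> nlinarith

lemma hPQ' (M : Matrix (Fin 3) (Fin 3) ℂ) : P * (Q * M) = M := by
  rw [← Matrix.mul_assoc, hPQ, Matrix.one_mul]

lemma hQP' (M : Matrix (Fin 3) (Fin 3) ℂ) : Q * (P * M) = M := by
  rw [← Matrix.mul_assoc, hQP, Matrix.one_mul]

lemma conj_cube (a : Matrix (Fin 3) (Fin 3) ℂ) : (Q * a * P) ^ 3 = Q * a ^ 3 * P := by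
  simp only [pow_succ, pow_zero, Matrix.one_mul, Matrix.mul_assoc, hPQ', hQP']

lemma cube_iff (a : Matrix (Fin 3) (Fin 3) ℂ) :
    a ^ 3 = a₀⁻¹ ↔ ∃ x : Fin 3 → ℂ, (∀ i, x i ^ 3 = d i) ∧ a = P * Matrix.diagonal x * Q := by
  constructor
  · intro h
    set b := Q * a * P with hb
    have hb3 : b ^ 3 = D := by
      rw [hb, conj_cube, h, hPDQ]
      rw [Matrix.mul_assoc P D Q, hQP' (D * Q), Matrix.mul_assoc, hQP, Matrix.mul_one]
    have hcomm : b * D = D * b := by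
      rw [← hb3, ← pow_succ, ← pow_succ']
    obtain hdiag := eq_diagonal_of_comm b hcomm
    refine ⟨fun i => b i i, ?_, ?_⟩
    · intro i
      have : (Matrix.diagonal fun i => b i i) ^ 3 = Matrix.diagonal d := by
        rw [← hdiag, hb3]; rfl
      rw [Matrix.diagonal_pow] at this
      have := Matrix.diagonal_injective this
      exact congrFun this i
    · rw [← hdiag, hb, Matrix.mul_assoc, Matrix.mul_assoc, hPQ, Matrix.mul_one, hPQ']
  · rintro ⟨x, hx, rfl⟩
    have h3 : (P * Matrix.diagonal x * Q) ^ 3 = P * (Matrix.diagonal x) ^ 3 * Q := by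
      simp only [pow_succ, pow_zero, Matrix.one_mul, Matrix.mul_assoc, hPQ', hQP']
    rw [h3, Matrix.diagonal_pow, hPDQ]
    have hxd : (x ^ 3) = d := by
      funext i
      exact hx i
    rw [D, hxd]

lemma x_inj {x : Fin 3 → ℂ} (hx : ∀ i, x i ^ 3 = d i) : Function.Injective x := by
  intro i j h
  apply d_inj
  rw [← hx i, ← hx j, h]

/-- Every cube root a of a₀⁻¹ in GL₃(ℂ) has three distinct eigenvalues
(its characteristic polynomial has three distinct roots), and there are exactly
27 matrices a with a³ = a₀⁻¹. -/
theorem stmt_15 :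
    (∀ a : Matrix (Fin 3) (Fin 3) ℂ, a ^ 3 = a₀⁻¹ →
      (Matrix.charpoly a).roots.Nodup ∧ Multiset.card (Matrix.charpoly a).roots = 3) ∧
    {a : Matrix (Fin 3) (Fin 3) ℂ | a ^ 3 = a₀⁻¹}.ncard = 27 := by
  constructor
  · intro a ha
    obtain ⟨x, hx, rfl⟩ := (cube_iff a).mp ha
    rw [charpoly_conj, roots_charpoly_diag]
    constructor
    · exact Multiset.Nodup.map (x_inj hx) Finset.univ.nodup
    · simp
  · have hset : {a : Matrix (Fin 3) (Fin 3) ℂ | a ^ 3 = a₀⁻¹} =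
        (fun b => P * b * Q) '' (Matrix.diagonal '' ↑(Fintype.piFinset r)) := by
      ext a
      simp only [Set.mem_setOf_eq, Set.mem_image, Finset.coe_sort_coe, Set.mem_image,
        Finset.mem_coe, Fintype.mem_piFinset]
      rw [cube_iff]
      constructor
      · rintro ⟨x, hx, rfl⟩
        exact ⟨Matrix.diagonal x, ⟨x, fun i => (mem_r_iff i (x i)).mpr (hx i), rfl⟩, rfl⟩
      · rintro ⟨_, ⟨x, hx, rfl⟩, rfl⟩
        exact ⟨x, fun i => (mem_r_iff i (x i)).mp (hx i), rfl⟩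
    rw [hset]
    have hinj1 : Function.Injective (fun b : Matrix (Fin 3) (Fin 3) ℂ => P * b * Q) := by
      intro b b' h
      simpa [Matrix.mul_assoc, hPQ', hQP', hQP, Matrix.mul_one] using
        congrArg (fun M => Q * M * P) h
    rw [Set.ncard_image_of_injective _ hinj1,
      Set.ncard_image_of_injective _ Matrix.diagonal_injective, Set.ncard_coe_finset,
      Fintype.card_piFinset]
    simp [card_r]

end Stmt15
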